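/- Upper bound on the minimal family size (Theorem 4.10): assume additionally that d divides n and 2 ≤ m. Then there exists a c-ideal family H of hash functions with |H| ≤ ⌈ ( (2πd)^{α/(2d)} · (d/α)^α · e^{α/(12d²)} · (α+1)^{α/d − 1} )^m · √(n/(2π)) · ln(u) ⌉; in the paper's notation with c = d/α this is H_c ≤ ⌈ ( √(2πcα)^{1/c} · c^α · e^{1/(12c²α)} / (α+1)^{1−1/c} )^m · √(n/(2π)) · ln u ⌉. -/

import Mathlib

open Finset

/-- The maximum cell load of hash function `h` on key set `S`. -/
def cost {u m : ℕ} (h : Fin u → Fin m) (S : Finset (Fin u)) : ℕ :=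
  Finset.univ.sup fun k : Fin m => (S.filter fun x => h x = k).card

/-- The collection of all `n`-element subsets of the universe `Fin u`. -/
def Sn (u n : ℕ) : Finset (Finset (Fin u)) :=
  Finset.univ.powersetCard n

/-- The maximal number of `n`-element sets any single hash function maps `c`-ideally
(i.e., with maximum cell load at most `d`). -/
def Mc (u m n d : ℕ) : ℕ :=
  Finset.univ.sup fun h : Fin u → Fin m =>
    ((Sn u n).filter fun S => cost h S ≤ d).card

/-- A family `H` of hash functions is `c`-ideal if every `n`-element set of keys is
hashed with maximum cell load at most `d` by some member of `H`. -/
def IsIdealFamily (u m n d : ℕ) (H : Finset (Fin u → Fin m)) : Prop :=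
  ∀ S ∈ Sn u n, ∃ h ∈ H, cost h S ≤ d

lemma fact_pow_le {c d : ℕ} (h : c ≤ d) : (c.factorial)^d ≤ (d.factorial)^c := by
  induction d, h using Nat.le_induction with
  | base => rfl
  | succ d hcd ih =>
    have h1 : c.factorial ^ (d+1) = c.factorial ^ d * c.factorial := pow_succ _ _
    have h2 : c.factorial ≤ (d+1)^c :=
      le_trans (Nat.factorial_le_pow c) (Nat.pow_le_pow_left (by omega) c)
    calc c.factorial ^ (d+1) = c.factorial ^ d * c.factorial := pow_succ _ _
      _ ≤ d.factorial ^ c * (d+1)^c := Nat.mul_le_mul ih h2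
      _ = ((d+1) * d.factorial)^c := by rw [← mul_pow, mul_comm]
      _ = (d+1).factorial ^ c := by rw [Nat.factorial_succ]

lemma prod_factorial_le {m d k : ℕ} (hd : 0 < d) (c : Fin m → ℕ) (hc : ∀ i, c i ≤ d)
    (hsum : ∑ i, c i = k * d) : (∏ i, (c i).factorial) ≤ (d.factorial)^k := by
  have key : ((∏ i, (c i).factorial))^d ≤ ((d.factorial)^k)^d := by
    calc (∏ i, (c i).factorial)^d = ∏ i, ((c i).factorial)^d := by rw [Finset.prod_pow]
      _ ≤ ∏ i, (d.factorial)^(c i) := Finset.prod_le_prod' fun i _ => fact_pow_le (hc i)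
      _ = (d.factorial)^(∑ i, c i) := by rw [Finset.prod_pow_eq_pow_sum]
      _ = ((d.factorial)^k)^d := by rw [hsum, ← pow_mul, mul_comm]
  exact (Nat.pow_le_pow_iff_left (by omega)).mp key


lemma exists_fun_fiber_card {m n : ℕ} (hm : 0 < m) (c : Fin m → ℕ) (hc : ∑ i, c i = n) :
    ∃ g : Fin n → Fin m, ∀ i, ((univ : Finset (Fin n)).filter fun p => g p = i).card = c i := by
  classical
  set c' : ℕ → ℕ := fun j => if h : j < m then c ⟨j, h⟩ else 0 with hc'
  set N : ℕ → ℕ := fun j => ∑ i ∈ Finset.range j, c' i with hN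
  have Nmono : Monotone N := fun a b hab =>
    Finset.sum_le_sum_of_subset (Finset.range_subset_range.mpr hab)
  have hNm : N m = n := by
    rw [hN, ← hc]
    simp only []
    rw [← Fin.sum_univ_eq_sum_range]
    exact Finset.sum_congr rfl fun i _ => by simp [hc', i.isLt]
  set cnt : ℕ → ℕ := fun q => ((Finset.range m).filter fun j => N (j+1) ≤ q).card with hcnt
  have hlt : ∀ q, q < n → cnt q < m := by
    intro q hq
    rcases lt_or_eq_of_le (le_trans (Finset.card_filter_le (Finset.range m) (fun j => N (j+1) ≤ q)) (Finset.card_range m).le) with h | h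
    · simpa using h
    · exfalso
      have heq : ((Finset.range m).filter fun j => N (j+1) ≤ q) = Finset.range m :=
        Finset.eq_of_subset_of_card_le (Finset.filter_subset _ _) (by simp [h])
      have : m - 1 ∈ (Finset.range m).filter fun j => N (j+1) ≤ q := by
        rw [heq]; exact Finset.mem_range.mpr (by omega)
      rw [Finset.mem_filter] at this
      have : N m ≤ q := by
        have : N (m - 1 + 1) ≤ q := this.2
        rwa [Nat.sub_add_cancel hm] at this
      omega
  set g : Fin n → Fin m := fun p => ⟨cnt p.val, hlt p.val p.isLt⟩ with hg
  have key : ∀ (q : ℕ), q < n → ∀ i : Fin m, (cnt q = i.val ↔ N i.val ≤ q ∧ q < N (i.val+1)) := by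
    intro q hq i
    constructor
    · intro h
      constructor
      · rcases Nat.eq_zero_or_pos i.val with h0 | h0
        · simp [h0, hN]
        · by_contra hcon
          push_neg at hcon
          have hsub : ((Finset.range m).filter fun j => N (j+1) ≤ q) ⊆
              Finset.range (i.val - 1) := by
            intro j hj
            rw [Finset.mem_filter] at hj
            rw [Finset.mem_range]
            by_contra hjge
            push_neg at hjge
            have : N i.val ≤ N (j + 1) := Nmono (by omega)
            omega
          have := Finset.card_le_card hsub
          rw [Finset.card_range] at this
          have h3 : cnt q ≤ i.val - 1 := this
          omega
      · by_contra hcon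
        push_neg at hcon
        have hsub : Finset.range (i.val + 1) ⊆
            (Finset.range m).filter fun j => N (j+1) ≤ q := by
          intro j hj
          rw [Finset.mem_range] at hj
          rw [Finset.mem_filter, Finset.mem_range]
          exact ⟨by omega, le_trans (Nmono (by omega)) hcon⟩
        have := Finset.card_le_card hsub
        rw [Finset.card_range] at this
        have h3 : i.val + 1 ≤ cnt q := this
        omega
    · rintro ⟨h1, h2⟩
      have heq : ((Finset.range m).filter fun j => N (j+1) ≤ q) = Finset.range i.val := by
        ext j
        rw [Finset.mem_filter, Finset.mem_range, Finset.mem_range]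
        constructor
        · rintro ⟨hjm, hjq⟩
          by_contra hji
          push_neg at hji
          have : N (i.val + 1) ≤ N (j + 1) := Nmono (by omega)
          omega
        · intro hji
          exact ⟨by omega, le_trans (Nmono (by omega)) h1⟩
      show ((Finset.range m).filter fun j => N (j+1) ≤ q).card = i.val
      rw [heq, Finset.card_range]
  refine ⟨g, fun i => ?_⟩
  have hiff : ∀ p : Fin n, g p = i ↔ N i.val ≤ p.val ∧ p.val < N (i.val + 1) := by
    intro p
    rw [Fin.ext_iff]
    exact key p.val p.isLt i
  rw [Finset.filter_congr (fun p _ => by rw [hiff p])]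
  have hble : N (i.val + 1) ≤ n := by rw [← hNm]; exact Nmono i.isLt
  have : ((univ : Finset (Fin n)).filter fun p =>
      N i.val ≤ p.val ∧ p.val < N (i.val + 1)).card = (Finset.Ico (N i.val) (N (i.val+1))).card := by
    apply Finset.card_bij (fun p _ => p.val)
    · intro p hp
      rw [Finset.mem_filter] at hp
      rw [Finset.mem_Ico]
      exact hp.2
    · intro p _ p' _ hpp'
      exact Fin.ext hpp'
    · intro q hq
      rw [Finset.mem_Ico] at hq
      exact ⟨⟨q, by omega⟩, Finset.mem_filter.mpr ⟨Finset.mem_univ _, hq⟩, rfl⟩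
  rw [this, Nat.card_Ico]
  have : N (i.val + 1) = N i.val + c' i.val := Finset.sum_range_succ _ _
  rw [this]
  simp [hc', i.isLt]


lemma minsum (d : ℕ) : ∀ (k T : ℕ), ∑ j ∈ Finset.range k, min d (T - j*d) = min T (k*d) := by
  intro k
  induction k with
  | zero => simp
  | succ k ih =>
    intro T
    rw [Finset.sum_range_succ, ih]
    have h1 : (k+1)*d = k*d + d := by ring
    rw [h1]
    omega

lemma count_ideal_lower {u m n d α k r : ℕ} (hm : 0 < m) (hd : 0 < d) (hαd : α ≤ d)
    (hαm : α * m = n) (hkd : k * d = n) (hrk : r + k = m)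
    (S : Finset (Fin u)) (hS : S.card = n) :
    (α+1)^r * n.factorial * m^(u-n) ≤
      ((univ : Finset (Fin u → Fin m)).filter fun h => cost h S ≤ d).card * (d.factorial)^k := by
  classical
  have hrm : r ≤ m := by omega
  -- the size vectors
  set cnat : (Fin r → Fin (α+1)) → ℕ → ℕ := fun v j =>
    if h : j < r then (v ⟨j, h⟩ : ℕ) else min d ((n - ∑ j, (v j : ℕ)) - (j - r) * d) with hcnat
  have P1 : ∀ v j, cnat v j ≤ d := by
    intro v j
    rw [hcnat]
    dsimp only
    split
    · exact le_trans (Nat.le_of_lt_succ (Fin.is_lt _)) hαd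
    · exact Nat.min_le_left _ _
  have hSV : ∀ v : Fin r → Fin (α+1), (∑ j, (v j : ℕ)) ≤ n := by
    intro v
    calc (∑ j, (v j : ℕ)) ≤ ∑ _j : Fin r, α :=
          Finset.sum_le_sum fun j _ => Nat.le_of_lt_succ (Fin.is_lt _)
      _ = r * α := by simp [mul_comm]
      _ ≤ m * α := Nat.mul_le_mul_right _ hrm
      _ = n := by rw [mul_comm]; exact hαm
  have P3 : ∀ v (j : Fin r), cnat v j.val = (v j : ℕ) := by
    intro v j
    rw [hcnat]
    simp [j.isLt]
  have P2 : ∀ v, ∑ i : Fin m, cnat v i.val = n := by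
    intro v
    rw [Fin.sum_univ_eq_sum_range (fun j => cnat v j) m]
    have hsplit : ∑ j ∈ Finset.range m, cnat v j =
        (∑ j ∈ Finset.range r, cnat v j) + ∑ j ∈ Finset.range k, cnat v (r + j) := by
      rw [← hrk, Finset.sum_range_add]
    rw [hsplit]
    have h1 : ∑ j ∈ Finset.range r, cnat v j = ∑ j, (v j : ℕ) := by
      rw [← Fin.sum_univ_eq_sum_range (fun j => cnat v j) r]
      exact Finset.sum_congr rfl fun j _ => P3 v j
    have h2 : ∑ j ∈ Finset.range k, cnat v (r + j) =
        ∑ j ∈ Finset.range k, min d ((n - ∑ j, (v j : ℕ)) - j * d) := by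
      apply Finset.sum_congr rfl
      intro j hj
      rw [hcnat]
      have : ¬ (r + j < r) := by omega
      simp only [this, dif_neg, not_false_iff]
      rw [Nat.add_sub_cancel_left]
    rw [h1, h2, minsum, hkd]
    have := hSV v
    omega
  -- choose fiber functions
  have hex : ∀ v : Fin r → Fin (α+1), ∃ g : Fin n → Fin m,
      ∀ i, ((univ : Finset (Fin n)).filter fun p => g p = i).card = cnat v i.val := by
    intro v
    exact exists_fun_fiber_card hm (fun i => cnat v i.val) (P2 v)
  choose g hg using hex
  -- the master map
  set F : ((Fin n ≃ {x : Fin u // x ∈ S}) × ((Fin r → Fin (α+1)) × ({x : Fin u // x ∉ S} → Fin m)))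
      → (Fin u → Fin m) := fun z x =>
    if hx : x ∈ S then g z.2.1 (z.1.symm ⟨x, hx⟩) else z.2.2 ⟨x, hx⟩ with hF
  have FIB : ∀ z i, (S.filter fun x => F z x = i).card = cnat z.2.1 i.val := by
    intro z i
    rw [← hg z.2.1 i]
    refine (Finset.card_bij (fun p _ => (z.1 p : Fin u)) ?_ ?_ ?_).symm
    · intro p hp
      rw [Finset.mem_filter] at hp ⊢
      refine ⟨(z.1 p).2, ?_⟩
      rw [hF]
      simp only [dif_pos (z.1 p).2]
      rw [Subtype.coe_eta, Equiv.symm_apply_apply]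
      exact hp.2
    · intro p _ p' _ hpp'
      exact z.1.injective (Subtype.ext hpp')
    · intro x hx
      rw [Finset.mem_filter] at hx
      refine ⟨z.1.symm ⟨x, hx.1⟩, ?_, ?_⟩
      · rw [Finset.mem_filter]
        refine ⟨Finset.mem_univ _, ?_⟩
        have := hx.2
        rw [hF] at this
        simpa only [dif_pos hx.1] using this
      · simp
  have COST : ∀ z, cost (F z) S ≤ d := by
    intro z
    apply Finset.sup_le
    intro i _
    rw [FIB]
    exact P1 _ _
  -- cardinality of the domain
  have hcards : Fintype.card ((Fin n ≃ {x : Fin u // x ∈ S}) ×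
      ((Fin r → Fin (α+1)) × ({x : Fin u // x ∉ S} → Fin m))) =
      n.factorial * ((α+1)^r * m^(u-n)) := by
    have e' : {x : Fin u // x ∈ S} ≃ Fin n :=
      Fintype.equivFinOfCardEq (by rw [Fintype.card_coe, hS])
    rw [Fintype.card_prod, Fintype.card_prod, Fintype.card_equiv e'.symm]
    congr 1
    · rw [Fintype.card_fin]
    congr 1
    · rw [Fintype.card_fun, Fintype.card_fin, Fintype.card_fin]
    · rw [Fintype.card_fun, Fintype.card_fin, Fintype.card_subtype_compl, Fintype.card_fin,
        Fintype.card_coe, hS]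
  -- fiber bound
  have hfib : ∀ h ∈ ((univ : Finset (Fin u → Fin m)).filter fun h => cost h S ≤ d),
      ((univ.filter fun z => F z = h).card : ℕ) ≤ (d.factorial)^k := by
    intro h _
    set Φ := univ.filter fun z => F z = h with hΦ
    rcases Φ.eq_empty_or_nonempty with he | ⟨z₀, hz₀⟩
    · rw [he]; simp
    have hFz₀ : F z₀ = h := (Finset.mem_filter.mp hz₀).2
    obtain ⟨b₀, v₀, w₀⟩ := z₀
    have hfibh : ∀ i : Fin m, (S.filter fun x => h x = i).card = cnat v₀ i.val := by
      intro i
      rw [← hFz₀]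
      exact FIB _ i
    -- every member of Φ has the same v and w components
    have hv : ∀ z ∈ Φ, z.2.1 = v₀ := by
      intro z hz
      have hFz : F z = h := (Finset.mem_filter.mp hz).2
      funext j
      have h1 : cnat z.2.1 j.val = cnat v₀ j.val := by
        have := FIB z ⟨j.val, lt_of_lt_of_le j.isLt hrm⟩
        rw [hFz] at this
        rw [← this, hfibh]
      rw [P3, P3] at h1
      exact Fin.ext h1
    have hw : ∀ z ∈ Φ, z.2.2 = w₀ := by
      intro z hz
      have hFz : F z = h := (Finset.mem_filter.mp hz).2
      funext x
      have h1 : F z x.val = h x.val := by rw [hFz]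
      have h2 : F (b₀, v₀, w₀) x.val = h x.val := by rw [hFz₀]
      rw [hF] at h1 h2
      simp only [dif_neg x.2] at h1 h2
      rw [Subtype.coe_eta] at h1 h2
      rw [h1, ← h2]
    -- the set of possible bijections
    set B₀ := (univ : Finset (Fin n ≃ {x : Fin u // x ∈ S})).filter
        (fun b => ∀ p, h (b p).val = g v₀ p) with hB₀
    have hsub : Φ ⊆ B₀.image (fun b => (b, v₀, w₀)) := by
      intro z hz
      have hz21 := hv z hz
      have hz22 := hw z hz
      have hFz : F z = h := (Finset.mem_filter.mp hz).2
      rw [Finset.mem_image]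
      refine ⟨z.1, ?_, ?_⟩
      · rw [hB₀, Finset.mem_filter]
        refine ⟨Finset.mem_univ _, fun p => ?_⟩
        rw [← hFz, hF]
        simp only [dif_pos (z.1 p).2]
        rw [Subtype.coe_eta, Equiv.symm_apply_apply, hz21]
      · rw [← hz21, ← hz22]
    have hΦB : Φ.card ≤ B₀.card :=
      le_trans (Finset.card_le_card hsub) (Finset.card_image_le)
    -- bound card of B₀ by product of factorials
    have hXcard : ∀ i : Fin m, Fintype.card {x : Fin u // x ∈ S.filter fun x => h x = i}
        = cnat v₀ i.val := by
      intro i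
      rw [Fintype.card_coe]
      exact hfibh i
    have hYcard : ∀ i : Fin m, Fintype.card {p : Fin n // g v₀ p = i} = cnat v₀ i.val := by
      intro i
      rw [Fintype.card_subtype]
      exact hg v₀ i
    have hB₀card : B₀.card ≤ ∏ i : Fin m, (cnat v₀ i.val).factorial := by
      have hT : Fintype.card (∀ i : Fin m,
          ({x : Fin u // x ∈ S.filter fun x => h x = i} ↪ {p : Fin n // g v₀ p = i})) =
          ∏ i : Fin m, (cnat v₀ i.val).factorial := by
        rw [Fintype.card_pi]
        apply Finset.prod_congr rfl
        intro i _
        rw [Fintype.card_embedding_eq, hXcard, hYcard, Nat.descFactorial_self]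
      rw [← hT, ← Fintype.card_coe B₀]
      have hB₀mem : ∀ b : Fin n ≃ {x : Fin u // x ∈ S},
          b ∈ B₀ ↔ ∀ p, h (b p).val = g v₀ p := by
        intro b
        rw [hB₀, Finset.mem_filter]
        simp
      have hbmem : ∀ b : {b // b ∈ B₀}, ∀ p, h (b.val p).val = g v₀ p :=
        fun b => (hB₀mem b.val).mp b.2
      set Ψ : {b // b ∈ B₀} → (∀ i : Fin m,
          ({x : Fin u // x ∈ S.filter fun x => h x = i} ↪ {p : Fin n // g v₀ p = i})) :=
        fun b i =>
          ⟨fun x => ⟨b.val.symm ⟨x.1, (Finset.mem_filter.mp x.2).1⟩, by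
            have hb := hbmem b (b.val.symm ⟨x.1, (Finset.mem_filter.mp x.2).1⟩)
            rw [Equiv.apply_symm_apply] at hb
            rw [← hb]
            exact (Finset.mem_filter.mp x.2).2⟩, by
            intro x x' hxx'
            rw [Subtype.mk.injEq] at hxx'
            have h5 := b.val.symm.injective hxx'
            rw [Subtype.mk.injEq] at h5
            exact Subtype.ext h5⟩ with hΨ
      apply Fintype.card_le_of_injective Ψ
      intro b b' hbb'
      have hsymm : ∀ x : {x : Fin u // x ∈ S}, b.val.symm x = b'.val.symm x := by
        intro x
        set i := h x.1 with hi
        have hxmem : x.1 ∈ S.filter fun y => h y = i := by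
          rw [Finset.mem_filter]
          exact ⟨x.2, rfl⟩
        have h1 := congrFun hbb' i
        have h2 := DFunLike.congr_fun h1 (⟨x.1, hxmem⟩ :
            {y : Fin u // y ∈ S.filter fun y => h y = i})
        rw [hΨ] at h2
        simp only [Function.Embedding.coeFn_mk] at h2
        rw [Subtype.mk.injEq] at h2
        exact h2
      apply Subtype.ext
      have h6 := congrArg Equiv.symm (Equiv.ext hsymm)
      rwa [Equiv.symm_symm, Equiv.symm_symm] at h6
    have hprod : (∏ i : Fin m, (cnat v₀ i.val).factorial) ≤ (d.factorial)^k :=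
      prod_factorial_le hd (fun i => cnat v₀ i.val) (fun i => P1 _ _) (by rw [P2, hkd])
    omega
  -- put it together
  have main := Finset.card_le_mul_card_image_of_maps_to
    (f := F) (s := (univ : Finset ((Fin n ≃ {x : Fin u // x ∈ S}) ×
      ((Fin r → Fin (α+1)) × ({x : Fin u // x ∉ S} → Fin m)))))
    (t := (univ : Finset (Fin u → Fin m)).filter fun h => cost h S ≤ d)
    (fun z _ => Finset.mem_filter.mpr ⟨Finset.mem_univ _, COST z⟩)
    ((d.factorial)^k) hfib
  rw [Finset.card_univ, hcards] at main
  calc (α+1)^r * n.factorial * m^(u-n) = n.factorial * ((α+1)^r * m^(u-n)) := by ring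
    _ ≤ (d.factorial)^k *
        ((univ : Finset (Fin u → Fin m)).filter fun h => cost h S ≤ d).card := main
    _ = _ := by ring


lemma greedy_cover (u m n d : ℕ) (hm : 0 < m) (p : ℝ) (hp0 : 0 ≤ p) (hp1 : p ≤ 1)
    (hp : ∀ S ∈ Sn u n, p * (m:ℝ)^u ≤
      (((univ : Finset (Fin u → Fin m)).filter fun h => cost h S ≤ d).card : ℝ)) :
    ∀ t : ℕ, ∃ H : Finset (Fin u → Fin m), H.card ≤ t ∧
      ((((Sn u n).filter fun S => ∀ h ∈ H, ¬ cost h S ≤ d).card : ℝ)) ≤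
        (u.choose n) * (1-p)^t := by
  classical
  haveI : Nonempty (Fin u → Fin m) := ⟨fun _ => ⟨0, hm⟩⟩
  have hSncard : (Sn u n).card = u.choose n := by
    rw [Sn, Finset.card_powersetCard, Finset.card_univ, Fintype.card_fin]
  intro t
  induction t with
  | zero =>
    refine ⟨∅, le_refl _, ?_⟩
    simp only [pow_zero, mul_one]
    rw [← hSncard]
    exact_mod_cast Finset.card_le_card (Finset.filter_subset _ _)
  | succ t ih =>
    obtain ⟨H, hHcard, hHbound⟩ := ih
    set R := (Sn u n).filter fun S => ∀ h ∈ H, ¬ cost h S ≤ d with hR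
    rcases R.eq_empty_or_nonempty with he | hne
    · refine ⟨H, le_trans hHcard (by omega), ?_⟩
      rw [← hR, he]
      simp only [Finset.card_empty, Nat.cast_zero]
      exact mul_nonneg (by positivity) (pow_nonneg (by linarith) _)
    -- find a good hash function
    have hdouble : ∑ h ∈ (univ : Finset (Fin u → Fin m)),
        ((R.filter fun S => cost h S ≤ d).card : ℝ) =
        ∑ S ∈ R, (((univ : Finset (Fin u → Fin m)).filter fun h => cost h S ≤ d).card : ℝ) := by
      push_cast
      rw [← Nat.cast_sum, ← Nat.cast_sum]
      congr 1
      simp only [Finset.card_filter]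
      rw [Finset.sum_comm]
    have hsum_lb : ((univ : Finset (Fin u → Fin m)).card : ℝ) * (p * R.card) ≤
        ∑ h ∈ (univ : Finset (Fin u → Fin m)),
          ((R.filter fun S => cost h S ≤ d).card : ℝ) := by
      rw [hdouble]
      have : ∀ S ∈ R, p * (m:ℝ)^u ≤
          (((univ : Finset (Fin u → Fin m)).filter fun h => cost h S ≤ d).card : ℝ) := by
        intro S hS
        exact hp S (Finset.mem_filter.mp hS).1
      calc ((univ : Finset (Fin u → Fin m)).card : ℝ) * (p * R.card)
          = ∑ _S ∈ R, p * (m:ℝ)^u := by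
            rw [Finset.sum_const, nsmul_eq_mul, Finset.card_univ, Fintype.card_fun,
              Fintype.card_fin, Fintype.card_fin]
            push_cast
            ring
        _ ≤ _ := Finset.sum_le_sum this
    have hex : ∃ h₀ ∈ (univ : Finset (Fin u → Fin m)),
        p * R.card ≤ ((R.filter fun S => cost h₀ S ≤ d).card : ℝ) := by
      by_contra hcon
      push_neg at hcon
      have hlt : ∑ h ∈ (univ : Finset (Fin u → Fin m)),
          ((R.filter fun S => cost h S ≤ d).card : ℝ) <
          ∑ _h ∈ (univ : Finset (Fin u → Fin m)), p * R.card := by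
        apply Finset.sum_lt_sum_of_nonempty
        · exact Finset.univ_nonempty
        · intro h hh
          exact hcon h hh
      rw [Finset.sum_const, nsmul_eq_mul] at hlt
      linarith
    obtain ⟨h₀, _, hh₀⟩ := hex
    refine ⟨insert h₀ H, le_trans (Finset.card_insert_le _ _) (by omega), ?_⟩
    have hsplit : (Sn u n).filter (fun S => ∀ h ∈ insert h₀ H, ¬ cost h S ≤ d) =
        R.filter fun S => ¬ cost h₀ S ≤ d := by
      rw [hR, Finset.filter_filter]
      apply Finset.filter_congr
      intro S _
      constructor
      · intro hall
        exact ⟨fun h hh => hall h (Finset.mem_insert_of_mem hh),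
          hall h₀ (Finset.mem_insert_self _ _)⟩
      · rintro ⟨hall, hh₀'⟩ h hh
        rcases Finset.mem_insert.mp hh with rfl | hh
        · exact hh₀'
        · exact hall h hh
    rw [hsplit]
    have hcardsplit : ((R.filter fun S => ¬ cost h₀ S ≤ d).card : ℝ) =
        (R.card : ℝ) - ((R.filter fun S => cost h₀ S ≤ d).card : ℝ) := by
      have := Finset.card_filter_add_card_filter_not
        (s := R) (p := fun S => cost h₀ S ≤ d)
      push_cast [← this]
      ring
    rw [hcardsplit]
    calc (R.card : ℝ) - ((R.filter fun S => cost h₀ S ≤ d).card : ℝ)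
        ≤ (R.card : ℝ) - p * R.card := by linarith
      _ = (R.card : ℝ) * (1 - p) := by ring
      _ ≤ ((u.choose n) * (1-p)^t) * (1 - p) := by
          apply mul_le_mul_of_nonneg_right _ (by linarith)
          exact hHbound
      _ = (u.choose n) * (1-p)^(t+1) := by ring


section StirlingBounds
open Filter Nat Real Topology Stirling

lemma stirling_lower (n : ℕ) (hn : 1 ≤ n) :
    Real.sqrt (2*π*n) * ((n:ℝ)/Real.exp 1)^n ≤ (n.factorial : ℝ) := by
  have hlim : Tendsto (stirlingSeq ∘ Nat.succ) atTop (𝓝 (Real.sqrt π)) :=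
    tendsto_stirlingSeq_sqrt_pi.comp (tendsto_add_atTop_nat 1)
  have hmono := Stirling.stirlingSeq'_antitone
  have hge : Real.sqrt π ≤ stirlingSeq n := by
    obtain ⟨j, rfl⟩ := Nat.exists_eq_add_of_le hn
    have := hmono.le_of_tendsto hlim j
    simpa [Function.comp, Nat.succ_eq_add_one, Nat.add_comm] using this
  rw [stirlingSeq] at hge
  have hpos : (0:ℝ) < Real.sqrt (2*n) * ((n:ℝ)/Real.exp 1)^n := by
    have h1 : (0:ℝ) < (n:ℝ) := by exact_mod_cast hn
    positivity
  rw [le_div_iff₀ hpos] at hge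
  calc Real.sqrt (2*π*n) * ((n:ℝ)/Real.exp 1)^n
      = Real.sqrt π * Real.sqrt (2*n) * ((n:ℝ)/Real.exp 1)^n := by
        rw [← Real.sqrt_mul (by positivity)]
        ring_nf
    _ ≤ (n.factorial : ℝ) := by
        calc Real.sqrt π * Real.sqrt (2*n) * ((n:ℝ)/Real.exp 1)^n
            = Real.sqrt π * (Real.sqrt (2*n) * ((n:ℝ)/Real.exp 1)^n) := by ring
          _ ≤ _ := hge

lemma log_diff_le (j : ℕ) :
    Real.log (stirlingSeq (j+1)) - Real.log (stirlingSeq (j+2)) ≤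
      1/12 * (1/((j:ℝ)+1) - 1/((j:ℝ)+2)) := by
  have hx0 : (0:ℝ) ≤ ((1:ℝ)/(2*((j:ℝ)+1)+1))^2 := sq_nonneg _
  have hx1 : ((1:ℝ)/(2*((j:ℝ)+1)+1))^2 < 1 := by
    rw [div_pow, one_pow]
    rw [div_lt_one (by positivity)]
    nlinarith [Nat.cast_nonneg (α := ℝ) j]
  set x : ℝ := ((1:ℝ)/(2*((j:ℝ)+1)+1))^2 with hxdef
  have hgeo : HasSum (fun k : ℕ => (1/3) * x^(k+1)) ((1/3) * (x/(1-x))) := by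
    have h := (hasSum_geometric_of_lt_one hx0 hx1).mul_left ((1/3) * x)
    have heq : ∀ k : ℕ, (1/3) * x * x^k = (1/3) * x^(k+1) := by
      intro k; rw [pow_succ]; ring
    simp_rw [heq] at h
    convert h using 1
    case e'_3 => rfl
    ring
  have hterm : ∀ k : ℕ, (1:ℝ)/(2*((k:ℕ)+1)+1) * x^(k+1) ≤ (1/3) * x^(k+1) := by
    intro k
    apply mul_le_mul_of_nonneg_right _ (pow_nonneg hx0 _)
    rw [div_le_div_iff₀ (by positivity) (by norm_num)]
    push_cast
    nlinarith [Nat.cast_nonneg (α := ℝ) k]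
  have hsum := log_stirlingSeq_diff_hasSum j
  have hle : Real.log (stirlingSeq (j+1)) - Real.log (stirlingSeq (j+2)) ≤
      (1/3) * (x/(1-x)) := by
    apply hasSum_le _ hsum hgeo
    intro k
    have := hterm k
    push_cast at this ⊢
    convert this using 2
  refine le_trans hle (le_of_eq ?_)
  rw [hxdef]
  have h1 : (2*((j:ℝ)+1)+1)^2 ≠ 0 := by positivity
  have h2 : (2*((j:ℝ)+1)+1)^2 - 1 ≠ 0 := by nlinarith [Nat.cast_nonneg (α := ℝ) j]
  have h3 : (1:ℝ) - ((1:ℝ)/(2*((j:ℝ)+1)+1))^2 = ((2*((j:ℝ)+1)+1)^2 - 1)/(2*((j:ℝ)+1)+1)^2 := by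
    field_simp
  rw [h3, div_pow, one_pow]
  have h4 : (1:ℝ)/(2*((j:ℝ)+1)+1)^2 / (((2*((j:ℝ)+1)+1)^2-1)/(2*((j:ℝ)+1)+1)^2) =
      1/((2*((j:ℝ)+1)+1)^2-1) := by
    field_simp
  rw [h4]
  have hJ1 : ((j:ℝ)+1) ≠ 0 := by positivity
  have hJ2 : ((j:ℝ)+2) ≠ 0 := by positivity
  field_simp
  ring

lemma log_telescope (j : ℕ) : ∀ N : ℕ,
    Real.log (stirlingSeq (j+1)) - Real.log (stirlingSeq (N+(j+1))) ≤
      1/12 * (1/((j:ℝ)+1) - 1/((N:ℝ)+(j:ℝ)+1)) := by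
  intro N
  induction N with
  | zero => simp
  | succ N ih =>
    have hstep := log_diff_le (N+j)
    have h1 : N+j+1 = N+(j+1) := by omega
    have h2 : N+j+2 = (N+1)+(j+1) := by omega
    rw [h1, h2] at hstep
    push_cast at hstep ih ⊢
    have h3 : (↑N + 1 + (↑j:ℝ) + 1) = ↑N + ↑j + 2 := by ring
    rw [h3]
    linarith

lemma stirlingSeq_le (j : ℕ) :
    stirlingSeq (j+1) ≤ Real.sqrt π * Real.exp (1/(12*((j:ℝ)+1))) := by
  have hπ : (0:ℝ) < Real.sqrt π := Real.sqrt_pos.mpr Real.pi_pos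
  have hlim : Filter.Tendsto (fun N : ℕ => stirlingSeq (N+(j+1))) atTop (𝓝 (Real.sqrt π)) :=
    tendsto_stirlingSeq_sqrt_pi.comp (tendsto_add_atTop_nat (j+1))
  have hloglim : Filter.Tendsto (fun N : ℕ => Real.log (stirlingSeq (N+(j+1)))) atTop
      (𝓝 (Real.log (Real.sqrt π))) := hlim.log (ne_of_gt hπ)
  have hub : Real.log (stirlingSeq (j+1)) - 1/12 * (1/((j:ℝ)+1)) ≤ Real.log (Real.sqrt π) := by
    apply ge_of_tendsto' hloglim
    intro N
    have h := log_telescope j N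
    have hpos : 0 < 1/((N:ℝ)+(j:ℝ)+1) := by positivity
    linarith
  have hspos : 0 < stirlingSeq (j+1) := stirlingSeq'_pos j
  have he : 1/12 * (1/((j:ℝ)+1)) = 1/(12*((j:ℝ)+1)) := by
    have : ((j:ℝ)+1) ≠ 0 := by positivity
    field_simp
  have h3 : Real.log (stirlingSeq (j+1)) ≤ Real.log (Real.sqrt π) + 1/(12*((j:ℝ)+1)) := by
    rw [← he]; linarith
  have h4 := Real.exp_le_exp.mpr h3
  rwa [Real.exp_add, Real.exp_log hspos, Real.exp_log hπ] at h4

lemma stirling_upper (d : ℕ) (hd : 1 ≤ d) :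
    (d.factorial : ℝ) ≤ Real.sqrt (2*π*d) * ((d:ℝ)/Real.exp 1)^d * Real.exp (1/(12*(d:ℝ))) := by
  obtain ⟨j, rfl⟩ : ∃ j, d = j+1 := ⟨d-1, by omega⟩
  have hs := stirlingSeq_le j
  have hcast : ((j:ℝ)+1) = (((j+1:ℕ)):ℝ) := by push_cast; ring
  rw [hcast] at hs
  have hden : (0:ℝ) < Real.sqrt (2*(((j+1:ℕ)):ℝ)) * ((((j+1:ℕ)):ℝ)/Real.exp 1)^(j+1) := by
    have : (0:ℝ) < (((j+1:ℕ)):ℝ) := by positivity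
    positivity
  have hfact : (((j+1).factorial : ℕ) : ℝ) =
      stirlingSeq (j+1) * (Real.sqrt (2*(((j+1:ℕ)):ℝ)) * ((((j+1:ℕ)):ℝ)/Real.exp 1)^(j+1)) := by
    rw [stirlingSeq]
    field_simp
  rw [hfact]
  have hsqrt : Real.sqrt (2*π*(((j+1:ℕ)):ℝ)) =
      Real.sqrt π * Real.sqrt (2*(((j+1:ℕ)):ℝ)) := by
    rw [show 2*π*(((j+1:ℕ)):ℝ) = π*(2*(((j+1:ℕ)):ℝ)) by ring,
      Real.sqrt_mul Real.pi_pos.le]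
  calc stirlingSeq (j+1) * (Real.sqrt (2*(((j+1:ℕ)):ℝ)) * ((((j+1:ℕ)):ℝ)/Real.exp 1)^(j+1))
      ≤ (Real.sqrt π * Real.exp (1/(12*(((j+1:ℕ)):ℝ)))) *
        (Real.sqrt (2*(((j+1:ℕ)):ℝ)) * ((((j+1:ℕ)):ℝ)/Real.exp 1)^(j+1)) :=
        mul_le_mul_of_nonneg_right hs (le_of_lt hden)
    _ = Real.sqrt (2*π*(((j+1:ℕ)):ℝ)) * ((((j+1:ℕ)):ℝ)/Real.exp 1)^(j+1) *
        Real.exp (1/(12*(((j+1:ℕ)):ℝ))) := by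
        rw [hsqrt]; ring

end StirlingBounds

open Real in
theorem upper_bound_minimal_family_size (u m n d : ℕ) (hu : 0 < u) (hm : 2 ≤ m)
    (hn : 0 < n) (hmn : m ≤ n) (hnu : n ^ 2 ≤ u) (hdvdm : m ∣ n) (hαd : n / m ≤ d)
    (hdvdd : d ∣ n) :
    ∃ H : Finset (Fin u → Fin m), IsIdealFamily u m n d H ∧
      H.card ≤ ⌈((2 * π * (d : ℝ)) ^ (((n / m : ℕ) : ℝ) / (2 * (d : ℝ))) *
          ((d : ℝ) / ((n / m : ℕ) : ℝ)) ^ (n / m) *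
          Real.exp (((n / m : ℕ) : ℝ) / (12 * (d : ℝ) ^ 2)) *
          (((n / m : ℕ) : ℝ) + 1) ^ ((((n / m : ℕ) : ℝ)) / (d : ℝ) - 1)) ^ m *
        Real.sqrt ((n : ℝ) / (2 * π)) * Real.log u⌉₊ := by
  classical
  set α := n / m with hαdef
  have hα : α * m = n := Nat.div_mul_cancel hdvdm
  have hα1 : 1 ≤ α := (Nat.one_le_div_iff (by omega)).mpr hmn
  have hd1 : 1 ≤ d := le_trans hα1 hαd
  set k := n / d with hkdef
  have hk : k * d = n := Nat.div_mul_cancel hdvdd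
  have hdn : d ≤ n := Nat.le_of_dvd hn hdvdd
  have hk1 : 1 ≤ k := (Nat.one_le_div_iff (by omega)).mpr hdn
  have hkm : k ≤ m := by
    have h1 : k * d ≤ m * d := by
      rw [hk, ← hα]
      calc α * m ≤ d * m := Nat.mul_le_mul_right m hαd
        _ = m * d := Nat.mul_comm d m
    exact Nat.le_of_mul_le_mul_right h1 (by omega)
  set r := m - k with hrdef
  have hrk : r + k = m := by omega
  have hnu' : n ≤ u := by nlinarith
  have hn2 : 2 ≤ n := le_trans hm hmn
  have hu2 : 2 ≤ u := by nlinarith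
  -- real cast facts
  have hαr : ((α:ℝ)) * m = n := by exact_mod_cast hα
  have hkr : ((k:ℝ)) * d = n := by exact_mod_cast hk
  have hdr0 : (0:ℝ) < d := by exact_mod_cast hd1
  have hαr0 : (0:ℝ) < α := by exact_mod_cast hα1
  have hnr0 : (0:ℝ) < n := by exact_mod_cast hn
  have hmr0 : (0:ℝ) < m := by exact_mod_cast (show 0 < m by omega)
  set B := (2 * π * (d : ℝ)) ^ (((α:ℕ) : ℝ) / (2 * (d : ℝ))) *
          ((d : ℝ) / ((α:ℕ) : ℝ)) ^ (α:ℕ) *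
          Real.exp (((α:ℕ) : ℝ) / (12 * (d : ℝ) ^ 2)) *
          (((α:ℕ) : ℝ) + 1) ^ ((((α:ℕ) : ℝ)) / (d : ℝ) - 1) with hB
  set X := B ^ m * Real.sqrt ((n : ℝ) / (2 * π)) * Real.log u with hX
  have h2πd : (0:ℝ) < 2*π*(d:ℝ) := by positivity
  have hA1 : (0:ℝ) < (α:ℝ)+1 := by positivity
  -- decompose B^m
  have hb1 : ((2 * π * (d:ℝ)) ^ (((α:ℕ):ℝ) / (2 * (d:ℝ))))^m
      = (Real.sqrt (2*π*(d:ℝ)))^k := by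
    rw [← Real.rpow_natCast ((2*π*(d:ℝ)) ^ ((α:ℝ)/(2*(d:ℝ)))) m, ← Real.rpow_mul h2πd.le,
        Real.sqrt_eq_rpow, ← Real.rpow_natCast ((2*π*(d:ℝ)) ^ ((1:ℝ)/2)) k,
        ← Real.rpow_mul h2πd.le]
    congr 1
    field_simp
    linear_combination hαr - hkr
  have hb2 : (((d:ℝ) / ((α:ℕ):ℝ)) ^ (α:ℕ))^m = ((d:ℝ)/((α:ℕ):ℝ))^n := by
    rw [← pow_mul, hα]
  have hb3 : (Real.exp (((α:ℕ):ℝ) / (12 * (d:ℝ) ^ 2)))^m = (Real.exp (1/(12*(d:ℝ))))^k := by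
    rw [← Real.exp_nat_mul, ← Real.exp_nat_mul]
    congr 1
    field_simp
    linear_combination hαr - hkr
  have hb4 : ((((α:ℕ):ℝ) + 1) ^ ((((α:ℕ):ℝ)) / (d:ℝ) - 1))^m
      = ((α:ℝ)+1)^(k:ℕ) / ((α:ℝ)+1)^(m:ℕ) := by
    rw [← Real.rpow_natCast ((((α:ℕ):ℝ)+1) ^ (((α:ℕ):ℝ)/(d:ℝ) - 1)) m,
      ← Real.rpow_mul hA1.le]
    rw [show (((α:ℕ):ℝ)/(d:ℝ) - 1) * (m:ℕ) = ((k:ℕ):ℝ) - ((m:ℕ):ℝ) by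
      field_simp
      linear_combination hαr - hkr]
    rw [Real.rpow_sub hA1, Real.rpow_natCast, Real.rpow_natCast]
  have hBm : B ^ m = (Real.sqrt (2*π*(d:ℝ)))^k * ((d:ℝ)/((α:ℕ):ℝ))^n *
      (Real.exp (1/(12*(d:ℝ))))^k * (((α:ℝ)+1)^(k:ℕ) / ((α:ℝ)+1)^(m:ℕ)) := by
    rw [hB, mul_pow, mul_pow, mul_pow, hb1, hb2, hb3, hb4]
  -- the master equality
  have I6 : Real.sqrt (2*π*(n:ℝ)) * Real.sqrt ((n:ℝ)/(2*π)) = (n:ℝ) := by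
    rw [← Real.sqrt_mul (by positivity)]
    rw [show (2*π*(n:ℝ))*((n:ℝ)/(2*π)) = (n:ℝ)^2 by field_simp]
    exact Real.sqrt_sq hnr0.le
  have I4 : ((n:ℝ)/Real.exp 1)^n * ((d:ℝ)/((α:ℕ):ℝ))^n = ((d:ℝ)/Real.exp 1)^n * (m:ℝ)^n := by
    rw [← mul_pow, ← mul_pow]
    congr 1
    field_simp
    linear_combination (-1:ℝ)*hαr
  have I5 : ((α:ℝ)+1)^r * (((α:ℝ)+1)^(k:ℕ)/((α:ℝ)+1)^(m:ℕ)) = 1 := by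
    rw [← mul_div_assoc]
    rw [← pow_add, hrk]
    exact div_self (pow_ne_zero _ (by positivity))
  have I3 : (((d:ℝ)/Real.exp 1)^d)^k = ((d:ℝ)/Real.exp 1)^n := by
    rw [← pow_mul, mul_comm d k, hk]
  have ME : ((α:ℝ)+1)^r * (Real.sqrt (2*π*(n:ℝ)) * ((n:ℝ)/Real.exp 1)^n) * B^m *
      Real.sqrt ((n:ℝ)/(2*π))
      = (n:ℝ) * (Real.sqrt (2*π*(d:ℝ)) * ((d:ℝ)/Real.exp 1)^d * Real.exp (1/(12*(d:ℝ))))^k *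
        (m:ℝ)^n := by
    rw [hBm, mul_pow, mul_pow, I3]
    calc ((α:ℝ)+1)^r * (Real.sqrt (2*π*(n:ℝ)) * ((n:ℝ)/Real.exp 1)^n) *
        ((Real.sqrt (2*π*(d:ℝ)))^k * ((d:ℝ)/((α:ℕ):ℝ))^n *
          (Real.exp (1/(12*(d:ℝ))))^k * (((α:ℝ)+1)^(k:ℕ) / ((α:ℝ)+1)^(m:ℕ))) *
        Real.sqrt ((n:ℝ)/(2*π))
        = (Real.sqrt (2*π*(n:ℝ)) * Real.sqrt ((n:ℝ)/(2*π))) *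
          (((n:ℝ)/Real.exp 1)^n * ((d:ℝ)/((α:ℕ):ℝ))^n) *
          (Real.sqrt (2*π*(d:ℝ)))^k * (Real.exp (1/(12*(d:ℝ))))^k *
          (((α:ℝ)+1)^r * (((α:ℝ)+1)^(k:ℕ)/((α:ℝ)+1)^(m:ℕ))) := by ring
      _ = (n:ℝ) * (((d:ℝ)/Real.exp 1)^n * (m:ℝ)^n) *
          (Real.sqrt (2*π*(d:ℝ)))^k * (Real.exp (1/(12*(d:ℝ))))^k * 1 := by
          rw [I6, I4, I5]
      _ = _ := by ring
  -- KEY2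
  have hB0 : (0:ℝ) ≤ B := by rw [hB]; positivity
  have KEY2 : (n:ℝ) * ((d.factorial^k : ℕ):ℝ) * (m:ℝ)^n ≤
      ((α:ℝ)+1)^r * (n.factorial:ℝ) * B^m * Real.sqrt ((n:ℝ)/(2*π)) := by
    have hub : ((d.factorial^k : ℕ):ℝ) ≤
        (Real.sqrt (2*π*(d:ℝ)) * ((d:ℝ)/Real.exp 1)^d * Real.exp (1/(12*(d:ℝ))))^k := by
      have h1 := stirling_upper d hd1
      have h2 : ((d.factorial^k : ℕ):ℝ) = ((d.factorial:ℝ))^k := by push_cast; ring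
      rw [h2]
      exact pow_le_pow_left₀ (Nat.cast_nonneg _) h1 k
    have hlb := stirling_lower n hn
    calc (n:ℝ) * ((d.factorial^k : ℕ):ℝ) * (m:ℝ)^n
        ≤ (n:ℝ) * (Real.sqrt (2*π*(d:ℝ)) * ((d:ℝ)/Real.exp 1)^d *
            Real.exp (1/(12*(d:ℝ))))^k * (m:ℝ)^n := by
          apply mul_le_mul_of_nonneg_right _ (by positivity)
          exact mul_le_mul_of_nonneg_left hub (by positivity)
      _ = ((α:ℝ)+1)^r * (Real.sqrt (2*π*(n:ℝ)) * ((n:ℝ)/Real.exp 1)^n) * B^m *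
          Real.sqrt ((n:ℝ)/(2*π)) := ME.symm
      _ ≤ ((α:ℝ)+1)^r * (n.factorial:ℝ) * B^m * Real.sqrt ((n:ℝ)/(2*π)) := by
          apply mul_le_mul_of_nonneg_right _ (Real.sqrt_nonneg _)
          apply mul_le_mul_of_nonneg_right _ (pow_nonneg hB0 m)
          exact mul_le_mul_of_nonneg_left hlb (by positivity)
  -- probability lower bound
  set a₁ : ℕ := (α+1)^r * n.factorial * m^(u-n) with ha₁
  set Dk : ℕ := d.factorial ^ k with hDk
  set p₀ : ℝ := (a₁:ℝ) / ((Dk:ℝ) * (m:ℝ)^u) with hp₀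
  have hDkpos : (0:ℝ) < (Dk:ℝ) := by
    rw [hDk]
    exact_mod_cast pow_pos d.factorial_pos k
  have hMpos : (0:ℝ) < (m:ℝ)^u := by positivity
  have ha₁pos : (0:ℝ) < (a₁:ℝ) := by
    rw [ha₁]
    have : 0 < (α+1)^r * n.factorial * m^(u-n) := by
      apply Nat.mul_pos (Nat.mul_pos (pow_pos (by omega : 0 < α+1) r) n.factorial_pos)
      exact Nat.pow_pos (by omega)
    exact_mod_cast this
  have hp₀pos : 0 < p₀ := by
    rw [hp₀]
    positivity
  have hp : ∀ S ∈ Sn u n, p₀ * (m:ℝ)^u ≤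
      (((univ : Finset (Fin u → Fin m)).filter fun h => cost h S ≤ d).card : ℝ) := by
    intro S hS
    have hScard : S.card = n := (Finset.mem_powersetCard.mp (by rwa [Sn] at hS)).2
    have hcnt := count_ideal_lower (show 0 < m by omega) (show 0 < d by omega)
      hαd hα hk hrk S hScard
    have hcntR : (a₁:ℝ) ≤
        (((univ : Finset (Fin u → Fin m)).filter fun h => cost h S ≤ d).card : ℝ) * (Dk:ℝ) := by
      rw [ha₁, hDk]
      exact_mod_cast hcnt
    rw [hp₀, div_mul_eq_mul_div, div_le_iff₀ (by positivity)]
    calc (a₁:ℝ) * (m:ℝ)^u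
        ≤ ((((univ : Finset (Fin u → Fin m)).filter fun h => cost h S ≤ d).card : ℝ) * (Dk:ℝ)) *
          (m:ℝ)^u := mul_le_mul_of_nonneg_right hcntR (by positivity)
      _ = (((univ : Finset (Fin u → Fin m)).filter fun h => cost h S ≤ d).card : ℝ) *
          ((Dk:ℝ) * (m:ℝ)^u) := by ring
  have hp₀le1 : p₀ ≤ 1 := by
    obtain ⟨S₀, hS₀⟩ : (Sn u n).Nonempty := by
      rw [Sn]
      apply Finset.powersetCard_nonempty.mpr
      rw [Finset.card_univ, Fintype.card_fin]
      exact hnu'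
    have h1 := hp S₀ hS₀
    have h2 : (((univ : Finset (Fin u → Fin m)).filter fun h => cost h S₀ ≤ d).card : ℝ) ≤
        (m:ℝ)^u := by
      have := Finset.card_filter_le (univ : Finset (Fin u → Fin m)) (fun h => cost h S₀ ≤ d)
      have h3 : (univ : Finset (Fin u → Fin m)).card = m^u := by
        rw [Finset.card_univ, Fintype.card_fun, Fintype.card_fin, Fintype.card_fin]
      calc (((univ : Finset (Fin u → Fin m)).filter fun h => cost h S₀ ≤ d).card : ℝ)
          ≤ ((univ : Finset (Fin u → Fin m)).card : ℝ) := by exact_mod_cast this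
        _ = (m:ℝ)^u := by rw [h3]; push_cast; ring
    have h4 : p₀ * (m:ℝ)^u ≤ (m:ℝ)^u := le_trans h1 h2
    have h4' : p₀ * (m:ℝ)^u ≤ 1 * (m:ℝ)^u := by rw [one_mul]; exact h4
    exact (mul_le_mul_iff_left₀ hMpos).mp h4'
  -- positivity facts
  have hur : (2:ℝ) ≤ (u:ℝ) := by exact_mod_cast hu2
  have hlogu : 0 < Real.log u := Real.log_pos (by linarith)
  have hBpos : 0 < B := by rw [hB]; positivity
  have hXpos : 0 < X := by
    rw [hX]
    exact mul_pos (mul_pos (pow_pos hBpos m) (Real.sqrt_pos.mpr (by positivity))) hlogu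
  have hmun : (m:ℝ)^n * (m:ℝ)^(u-n) = (m:ℝ)^u := by
    rw [← pow_add]
    congr 1
    omega
  have ha₁R : (a₁:ℝ) = ((α:ℝ)+1)^r * (n.factorial:ℝ) * (m:ℝ)^(u-n) := by
    rw [ha₁]; push_cast; ring
  have hstep : (n:ℝ) * ((Dk:ℝ) * (m:ℝ)^u) ≤ (a₁:ℝ) * (B^m * Real.sqrt ((n:ℝ)/(2*π))) := by
    have h5 := mul_le_mul_of_nonneg_right KEY2 (show (0:ℝ) ≤ (m:ℝ)^(u-n) by positivity)
    calc (n:ℝ) * ((Dk:ℝ) * (m:ℝ)^u)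
        = (n:ℝ) * ((d.factorial^k:ℕ):ℝ) * (m:ℝ)^n * (m:ℝ)^(u-n) := by
          rw [← hmun, hDk]; ring
      _ ≤ ((α:ℝ)+1)^r * (n.factorial:ℝ) * B^m * Real.sqrt ((n:ℝ)/(2*π)) * (m:ℝ)^(u-n) := h5
      _ = (a₁:ℝ) * (B^m * Real.sqrt ((n:ℝ)/(2*π))) := by rw [ha₁R]; ring
  have hnX : (n:ℝ) * Real.log u ≤ p₀ * X := by
    have h1 : (n:ℝ) ≤ p₀ * (B^m * Real.sqrt ((n:ℝ)/(2*π))) := by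
      rw [hp₀, div_mul_eq_mul_div, le_div_iff₀ (by positivity)]
      calc (n:ℝ) * ((Dk:ℝ) * (m:ℝ)^u) ≤ (a₁:ℝ) * (B^m * Real.sqrt ((n:ℝ)/(2*π))) := hstep
        _ = (a₁:ℝ) * (B ^ m * Real.sqrt ((n:ℝ) / (2 * π))) := by ring
    calc (n:ℝ) * Real.log u ≤ (p₀ * (B^m * Real.sqrt ((n:ℝ)/(2*π)))) * Real.log u :=
          mul_le_mul_of_nonneg_right h1 hlogu.le
      _ = p₀ * X := by rw [hX]; ring
  obtain ⟨H, hHcard, hHbound⟩ := greedy_cover u m n d (by omega) p₀ hp₀pos.le hp₀le1 hp ⌈X⌉₊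
  refine ⟨H, ?_, hHcard⟩
  have hunc : ((Sn u n).filter fun S => ∀ h ∈ H, ¬ cost h S ≤ d) = ∅ := by
    rw [← Finset.card_eq_zero]
    by_contra hne
    have hge1 : (1:ℝ) ≤ (((Sn u n).filter fun S => ∀ h ∈ H, ¬ cost h S ≤ d).card : ℝ) := by
      have h6 : 1 ≤ ((Sn u n).filter fun S => ∀ h ∈ H, ¬ cost h S ≤ d).card := by omega
      exact_mod_cast h6
    have ht1 : 1 ≤ ⌈X⌉₊ := by
      rw [Nat.one_le_iff_ne_zero]
      intro h0
      rw [Nat.ceil_eq_zero] at h0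
      linarith
    have htX : X ≤ (⌈X⌉₊ : ℝ) := Nat.le_ceil X
    have hppt : (n:ℝ) * Real.log u ≤ p₀ * (⌈X⌉₊:ℝ) :=
      le_trans hnX (mul_le_mul_of_nonneg_left htX hp₀pos.le)
    have hcs : ((u.choose n : ℕ):ℝ) ≤ (u:ℝ)^n := by
      exact_mod_cast Nat.choose_le_pow u n
    have hlt : (1-p₀) ^ (⌈X⌉₊:ℕ) < Real.exp (-p₀) ^ (⌈X⌉₊:ℕ) := by
      apply pow_lt_pow_left₀ _ (by linarith) (by omega)
      have h7 := Real.add_one_lt_exp (x := -p₀) (neg_lt_zero.mpr hp₀pos).ne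
      linarith
    have hc0 : (0:ℝ) < ((u.choose n:ℕ):ℝ) := by
      exact_mod_cast Nat.choose_pos hnu'
    have hchain : (((Sn u n).filter fun S => ∀ h ∈ H, ¬ cost h S ≤ d).card : ℝ) < 1 := by
      calc (((Sn u n).filter fun S => ∀ h ∈ H, ¬ cost h S ≤ d).card : ℝ)
          ≤ (u.choose n) * (1-p₀)^⌈X⌉₊ := hHbound
        _ < (u.choose n) * Real.exp (-p₀)^⌈X⌉₊ := mul_lt_mul_of_pos_left hlt hc0
        _ = (u.choose n) * Real.exp (-(p₀ * (⌈X⌉₊:ℝ))) := by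
            rw [← Real.exp_nat_mul, show ((⌈X⌉₊:ℝ) * -p₀) = -(p₀ * (⌈X⌉₊:ℝ)) by ring]
        _ ≤ (u:ℝ)^n * Real.exp (-(p₀ * (⌈X⌉₊:ℝ))) :=
            mul_le_mul_of_nonneg_right hcs (le_of_lt (Real.exp_pos _))
        _ ≤ (u:ℝ)^n * Real.exp (-((n:ℝ) * Real.log u)) := by
            apply mul_le_mul_of_nonneg_left _ (by positivity)
            rw [Real.exp_le_exp]
            linarith
        _ = 1 := by
            rw [Real.exp_neg, Real.exp_nat_mul, Real.exp_log (by positivity : (0:ℝ) < (u:ℝ))]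
            field_simp
    linarith
  intro S hS
  by_contra hcon
  push_neg at hcon
  have hSmem : S ∈ (Sn u n).filter fun S => ∀ h ∈ H, ¬ cost h S ≤ d := by
    rw [Finset.mem_filter]
    exact ⟨hS, fun h hh => Nat.not_le.mpr (hcon h hh)⟩
  rw [hunc] at hSmem
  exact absurd hSmem (Finset.notMem_empty S)
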